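/- arXiv:math/0608516 — 2 statements merged into one kernel-verified Lean document; each statement's English description precedes it below -/
import Mathlib

section
/- Let I ⊆ ℝ be an open interval and G : I → ℝ a C² function with G' ≥ 0 on I. On the open set ℝ×ℝ×I one has W ≥ p ≥ 1, so p/W and q/W are C¹ there, and at every point of the graphical strip S = {(yG(t), y, t) : y ∈ ℝ, t ∈ I} the identity X1(p/W) + X2(q/W) = 0 holds; that is, every graphical strip is H-minimal (its horizontal mean curvature vanishes identically). -/
noncomputable def pfun (G : ℝ → ℝ) (g : ℝ × ℝ × ℝ) : ℝ :=
  1 + g.2.1 ^ 2 / 2 * deriv G g.2.2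

noncomputable def qfun (G : ℝ → ℝ) (g : ℝ × ℝ × ℝ) : ℝ :=
  -G g.2.2 - g.1 * g.2.1 / 2 * deriv G g.2.2

noncomputable def omfun (G : ℝ → ℝ) (g : ℝ × ℝ × ℝ) : ℝ :=
  -g.2.1 * deriv G g.2.2

noncomputable def Wfun (G : ℝ → ℝ) (g : ℝ × ℝ × ℝ) : ℝ :=
  Real.sqrt (pfun G g ^ 2 + qfun G g ^ 2)

noncomputable def dX (f : ℝ × ℝ × ℝ → ℝ) (g : ℝ × ℝ × ℝ) : ℝ :=
  deriv (fun x => f (x, g.2.1, g.2.2)) g.1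

noncomputable def dYc (f : ℝ × ℝ × ℝ → ℝ) (g : ℝ × ℝ × ℝ) : ℝ :=
  deriv (fun y => f (g.1, y, g.2.2)) g.2.1

noncomputable def dT (f : ℝ × ℝ × ℝ → ℝ) (g : ℝ × ℝ × ℝ) : ℝ :=
  deriv (fun t => f (g.1, g.2.1, t)) g.2.2

noncomputable def X1op (f : ℝ × ℝ × ℝ → ℝ) (g : ℝ × ℝ × ℝ) : ℝ :=
  dX f g - g.2.1 / 2 * dT f g

noncomputable def X2op (f : ℝ × ℝ × ℝ → ℝ) (g : ℝ × ℝ × ℝ) : ℝ :=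
  dYc f g + g.1 / 2 * dT f g

noncomputable def Yop (G : ℝ → ℝ) (f : ℝ × ℝ × ℝ → ℝ) (g : ℝ × ℝ × ℝ) : ℝ :=
  (pfun G g * X1op f g + qfun G g * X2op f g) / Wfun G g

lemma keyP (P Q : ℝ → ℝ) (s p' q' : ℝ) (hP : HasDerivAt P p' s) (hQ : HasDerivAt Q q' s)
    (hpos : 0 < P s ^ 2 + Q s ^ 2) :
    HasDerivAt (fun u => P u / Real.sqrt (P u ^ 2 + Q u ^ 2))
      ((p' * Q s ^ 2 - P s * Q s * q') / (P s ^ 2 + Q s ^ 2) / Real.sqrt (P s ^ 2 + Q s ^ 2)) s := by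
  have hW : 0 < Real.sqrt (P s ^ 2 + Q s ^ 2) := Real.sqrt_pos.2 hpos
  have hW2 : Real.sqrt (P s ^ 2 + Q s ^ 2) ^ 2 = P s ^ 2 + Q s ^ 2 :=
    Real.sq_sqrt hpos.le
  have hin : HasDerivAt (fun u => P u ^ 2 + Q u ^ 2)
      (2 * P s ^ 1 * p' + 2 * Q s ^ 1 * q') s := (hP.pow 2).add (hQ.pow 2)
  have hsq : HasDerivAt (fun u => Real.sqrt (P u ^ 2 + Q u ^ 2))
      ((2 * P s ^ 1 * p' + 2 * Q s ^ 1 * q') / (2 * Real.sqrt (P s ^ 2 + Q s ^ 2))) s := by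
    simpa [div_eq_mul_inv, mul_comm, Function.comp_def] using
      (Real.hasDerivAt_sqrt hpos.ne').comp s hin
  have : HasDerivAt (fun u => P u / Real.sqrt (P u ^ 2 + Q u ^ 2)) _ s := hP.div hsq hW.ne'
  convert this using 1
  set w := Real.sqrt (P s ^ 2 + Q s ^ 2) with hw
  field_simp
  linear_combination (-P s*(p'*P s + Q s*q')) * hW2

lemma keyQ (P Q : ℝ → ℝ) (s p' q' : ℝ) (hP : HasDerivAt P p' s) (hQ : HasDerivAt Q q' s)
    (hpos : 0 < P s ^ 2 + Q s ^ 2) :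
    HasDerivAt (fun u => Q u / Real.sqrt (P u ^ 2 + Q u ^ 2))
      ((q' * P s ^ 2 - Q s * P s * p') / (P s ^ 2 + Q s ^ 2) / Real.sqrt (P s ^ 2 + Q s ^ 2)) s := by
  have h := keyP Q P s q' p' hQ hP (by linarith)
  have he : (fun u => Q u / Real.sqrt (Q u ^ 2 + P u ^ 2))
      = fun u => Q u / Real.sqrt (P u ^ 2 + Q u ^ 2) := by
    funext u; rw [add_comm]
  rw [he, add_comm (Q s ^ 2)] at h
  exact h

set_option maxHeartbeats 1000000 in
/-- On `ℝ×ℝ×I` one has `W ≥ p ≥ 1`, so `p/W` and `q/W` are C¹ there, and at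
every point of the graphical strip `x = yG(t)` one has `X1(p/W) + X2(q/W) = 0`:
every graphical strip is H-minimal. -/
theorem stmt1 (I : Set ℝ) (hIo : IsOpen I) (hIc : I.OrdConnected)
    (G : ℝ → ℝ) (hG : ContDiffOn ℝ 2 G I) (hG' : ∀ t ∈ I, 0 ≤ deriv G t) :
    (∀ g : ℝ × ℝ × ℝ, g.2.2 ∈ I → 1 ≤ pfun G g ∧ pfun G g ≤ Wfun G g) ∧
    ContDiffOn ℝ 1 (fun g => pfun G g / Wfun G g)
      ((Set.univ ×ˢ Set.univ ×ˢ I : Set (ℝ × ℝ × ℝ))) ∧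
    ContDiffOn ℝ 1 (fun g => qfun G g / Wfun G g)
      ((Set.univ ×ˢ Set.univ ×ˢ I : Set (ℝ × ℝ × ℝ))) ∧
    ∀ y : ℝ, ∀ t ∈ I,
      X1op (fun g => pfun G g / Wfun G g) (y * G t, y, t)
        + X2op (fun g => qfun G g / Wfun G g) (y * G t, y, t) = 0 := by
  have hGc : ContDiffOn ℝ 1 G I := hG.of_le (by norm_num)
  have hGd : ContDiffOn ℝ 1 (deriv G) I := hG.deriv_of_isOpen hIo (by norm_num)
  have hpart1 : ∀ g : ℝ × ℝ × ℝ, g.2.2 ∈ I → 1 ≤ pfun G g ∧ pfun G g ≤ Wfun G g := by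
    intro g hg
    have h0 : 0 ≤ g.2.1 ^ 2 / 2 * deriv G g.2.2 :=
      mul_nonneg (div_nonneg (sq_nonneg _) (by norm_num)) (hG' _ hg)
    have hp : 1 ≤ pfun G g := by unfold pfun; linarith
    refine ⟨hp, ?_⟩
    calc pfun G g = Real.sqrt (pfun G g ^ 2) := (Real.sqrt_sq (by linarith)).symm
      _ ≤ Wfun G g := Real.sqrt_le_sqrt (by nlinarith [sq_nonneg (qfun G g)])
  have hUo : IsOpen ((Set.univ ×ˢ Set.univ ×ˢ I : Set (ℝ × ℝ × ℝ))) :=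
    isOpen_univ.prod (isOpen_univ.prod hIo)
  have hproj : ContDiff ℝ 1 (fun g : ℝ × ℝ × ℝ => g.2.2) :=
    contDiff_snd.comp contDiff_snd
  have hd : ContDiffOn ℝ 1 (fun g : ℝ × ℝ × ℝ => deriv G g.2.2)
      ((Set.univ ×ˢ Set.univ ×ˢ I : Set (ℝ × ℝ × ℝ))) :=
    hGd.comp hproj.contDiffOn (fun g hg => hg.2.2)
  have hg0 : ContDiffOn ℝ 1 (fun g : ℝ × ℝ × ℝ => G g.2.2)
      ((Set.univ ×ˢ Set.univ ×ˢ I : Set (ℝ × ℝ × ℝ))) :=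
    hGc.comp hproj.contDiffOn (fun g hg => hg.2.2)
  have hpC : ContDiffOn ℝ 1 (pfun G)
      ((Set.univ ×ˢ Set.univ ×ˢ I : Set (ℝ × ℝ × ℝ))) := by
    have hc : ContDiff ℝ 1 (fun g : ℝ × ℝ × ℝ => g.2.1 ^ 2 / 2) := by fun_prop (disch := norm_num)
    exact contDiffOn_const.add (hc.contDiffOn.mul hd)
  have hqC : ContDiffOn ℝ 1 (qfun G)
      ((Set.univ ×ˢ Set.univ ×ˢ I : Set (ℝ × ℝ × ℝ))) := by
    have hc : ContDiff ℝ 1 (fun g : ℝ × ℝ × ℝ => g.1 * g.2.1 / 2) := by fun_prop (disch := norm_num)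
    exact hg0.neg.sub (hc.contDiffOn.mul hd)
  have hat : ∀ g ∈ ((Set.univ ×ˢ Set.univ ×ˢ I : Set (ℝ × ℝ × ℝ))),
      ContDiffAt ℝ 1 (pfun G) g ∧ ContDiffAt ℝ 1 (qfun G) g ∧
      ContDiffAt ℝ 1 (Wfun G) g ∧ Wfun G g ≠ 0 := by
    intro g hg
    have hpA : ContDiffAt ℝ 1 (pfun G) g := hpC.contDiffAt (hUo.mem_nhds hg)
    have hqA : ContDiffAt ℝ 1 (qfun G) g := hqC.contDiffAt (hUo.mem_nhds hg)
    have h1 := hpart1 g hg.2.2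
    have hpos : 0 < pfun G g ^ 2 + qfun G g ^ 2 := by nlinarith [sq_nonneg (qfun G g)]
    have hWA : ContDiffAt ℝ 1 (Wfun G) g :=
      ContDiffAt.sqrt ((hpA.pow 2).add (hqA.pow 2)) hpos.ne'
    have hWne : Wfun G g ≠ 0 := by
      have := h1.1.trans h1.2; unfold Wfun at *; positivity
    exact ⟨hpA, hqA, hWA, hWne⟩
  refine ⟨hpart1, ?_, ?_, ?_⟩
  · intro g hg
    obtain ⟨hpA, hqA, hWA, hWne⟩ := hat g hg
    exact (hpA.div hWA hWne).contDiffWithinAt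
  · intro g hg
    obtain ⟨hpA, hqA, hWA, hWne⟩ := hat g hg
    exact (hqA.div hWA hWne).contDiffWithinAt
  · intro y t ht
    have ha : HasDerivAt G (deriv G t) t :=
      (((hG.differentiableOn (by norm_num)) t ht).differentiableAt
        (hIo.mem_nhds ht)).hasDerivAt
    have hb : HasDerivAt (deriv G) (deriv (deriv G) t) t :=
      (((hGd.differentiableOn (by norm_num)) t ht).differentiableAt
        (hIo.mem_nhds ht)).hasDerivAt
    have hA : 0 ≤ deriv G t := hG' t ht
    have hposx : 0 < (1 + y ^ 2 / 2 * deriv G t) ^ 2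
        + (-G t - y * G t * y / 2 * deriv G t) ^ 2 := by
      nlinarith [sq_nonneg y, sq_nonneg (-G t - y * G t * y / 2 * deriv G t),
        mul_nonneg (sq_nonneg y) hA]
    -- slice derivative inputs
    have hQx : HasDerivAt (fun x' : ℝ => -G t - x' * y / 2 * deriv G t)
        (-(1 * y / 2 * deriv G t)) (y * G t) :=
      HasDerivAt.const_sub (-G t)
        ((((hasDerivAt_id (y * G t)).mul_const y).div_const 2).mul_const (deriv G t))
    have hPt : HasDerivAt (fun t' : ℝ => 1 + y ^ 2 / 2 * deriv G t')
        (y ^ 2 / 2 * deriv (deriv G) t) t :=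
      HasDerivAt.const_add 1 (HasDerivAt.const_mul (y ^ 2 / 2) hb)
    have hQt : HasDerivAt (fun t' : ℝ => -G t' - y * G t * y / 2 * deriv G t')
        (-deriv G t - y * G t * y / 2 * deriv (deriv G) t) t :=
      ha.neg.sub (HasDerivAt.const_mul (y * G t * y / 2) hb)
    have hPy : HasDerivAt (fun y' : ℝ => 1 + y' ^ 2 / 2 * deriv G t)
        (((2 : ℕ) : ℝ) * y ^ 1 / 2 * deriv G t) y :=
      HasDerivAt.const_add 1 (((hasDerivAt_pow 2 y).div_const 2).mul_const (deriv G t))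
    have hQy : HasDerivAt (fun y' : ℝ => -G t - y * G t * y' / 2 * deriv G t)
        (-(y * G t * 1 / 2 * deriv G t)) y :=
      HasDerivAt.const_sub (-G t)
        ((((hasDerivAt_id y).const_mul (y * G t)).div_const 2).mul_const (deriv G t))
    -- the four directional derivatives
    have e1 : dX (fun g => pfun G g / Wfun G g) (y * G t, y, t)
        = ((0 : ℝ) * (-G t - y * G t * y / 2 * deriv G t) ^ 2
            - (1 + y ^ 2 / 2 * deriv G t) * (-G t - y * G t * y / 2 * deriv G t)
              * (-(1 * y / 2 * deriv G t)))
          / ((1 + y ^ 2 / 2 * deriv G t) ^ 2 + (-G t - y * G t * y / 2 * deriv G t) ^ 2)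
          / Real.sqrt ((1 + y ^ 2 / 2 * deriv G t) ^ 2
            + (-G t - y * G t * y / 2 * deriv G t) ^ 2) :=
      (keyP (fun _ : ℝ => 1 + y ^ 2 / 2 * deriv G t)
        (fun x' => -G t - x' * y / 2 * deriv G t) (y * G t) 0 (-(1 * y / 2 * deriv G t))
        (hasDerivAt_const _ _) hQx hposx).deriv
    have e2 : dT (fun g => pfun G g / Wfun G g) (y * G t, y, t)
        = ((y ^ 2 / 2 * deriv (deriv G) t) * (-G t - y * G t * y / 2 * deriv G t) ^ 2
            - (1 + y ^ 2 / 2 * deriv G t) * (-G t - y * G t * y / 2 * deriv G t)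
              * (-deriv G t - y * G t * y / 2 * deriv (deriv G) t))
          / ((1 + y ^ 2 / 2 * deriv G t) ^ 2 + (-G t - y * G t * y / 2 * deriv G t) ^ 2)
          / Real.sqrt ((1 + y ^ 2 / 2 * deriv G t) ^ 2
            + (-G t - y * G t * y / 2 * deriv G t) ^ 2) :=
      (keyP (fun t' : ℝ => 1 + y ^ 2 / 2 * deriv G t')
        (fun t' : ℝ => -G t' - y * G t * y / 2 * deriv G t') t
        (y ^ 2 / 2 * deriv (deriv G) t)
        (-deriv G t - y * G t * y / 2 * deriv (deriv G) t) hPt hQt hposx).deriv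
    have e3 : dYc (fun g => qfun G g / Wfun G g) (y * G t, y, t)
        = ((-(y * G t * 1 / 2 * deriv G t)) * (1 + y ^ 2 / 2 * deriv G t) ^ 2
            - (-G t - y * G t * y / 2 * deriv G t) * (1 + y ^ 2 / 2 * deriv G t)
              * (((2 : ℕ) : ℝ) * y ^ 1 / 2 * deriv G t))
          / ((1 + y ^ 2 / 2 * deriv G t) ^ 2 + (-G t - y * G t * y / 2 * deriv G t) ^ 2)
          / Real.sqrt ((1 + y ^ 2 / 2 * deriv G t) ^ 2
            + (-G t - y * G t * y / 2 * deriv G t) ^ 2) :=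
      (keyQ (fun y' : ℝ => 1 + y' ^ 2 / 2 * deriv G t)
        (fun y' : ℝ => -G t - y * G t * y' / 2 * deriv G t) y
        (((2 : ℕ) : ℝ) * y ^ 1 / 2 * deriv G t)
        (-(y * G t * 1 / 2 * deriv G t)) hPy hQy hposx).deriv
    have e4 : dT (fun g => qfun G g / Wfun G g) (y * G t, y, t)
        = ((-deriv G t - y * G t * y / 2 * deriv (deriv G) t) * (1 + y ^ 2 / 2 * deriv G t) ^ 2
            - (-G t - y * G t * y / 2 * deriv G t) * (1 + y ^ 2 / 2 * deriv G t)
              * (y ^ 2 / 2 * deriv (deriv G) t))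
          / ((1 + y ^ 2 / 2 * deriv G t) ^ 2 + (-G t - y * G t * y / 2 * deriv G t) ^ 2)
          / Real.sqrt ((1 + y ^ 2 / 2 * deriv G t) ^ 2
            + (-G t - y * G t * y / 2 * deriv G t) ^ 2) :=
      (keyQ (fun t' : ℝ => 1 + y ^ 2 / 2 * deriv G t')
        (fun t' : ℝ => -G t' - y * G t * y / 2 * deriv G t') t
        (y ^ 2 / 2 * deriv (deriv G) t)
        (-deriv G t - y * G t * y / 2 * deriv (deriv G) t) hPt hQt hposx).deriv
    have hw : Real.sqrt ((1 + y ^ 2 / 2 * deriv G t) ^ 2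
        + (-G t - y * G t * y / 2 * deriv G t) ^ 2) ≠ 0 :=
      (Real.sqrt_pos.2 hposx).ne'
    simp only [X1op, X2op, dX, dYc, dT]
    simp only [dX, dYc, dT] at e1 e2 e3 e4
    rw [e1, e2, e3, e4]
    field_simp
    ring
end

section
/- Let I ⊆ ℝ be an open interval and G : I → ℝ a C² function with G' ≥ 0 on I. Write p̄ = p/W, q̄ = q/W, ω̄ = ω/W. Then at every point (yG(t), y, t) of the graphical strip S one has the identity 2(p̄·Tq̄ − q̄·Tp̄) + 2ω̄·(q̄·Yp̄ − p̄·Yq̄) + ω̄² = −2G'(t)/W², where all ambient derivatives on ℝ×ℝ×I are evaluated at points of S. -/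
lemma key1 (P Q : ℝ → ℝ) (x p' q' : ℝ) (hP : HasDerivAt P p' x) (hQ : HasDerivAt Q q' x)
    (h0 : 0 < P x ^ 2 + Q x ^ 2) :
    HasDerivAt (fun s => P s / Real.sqrt (P s ^ 2 + Q s ^ 2))
      (Q x * (Q x * p' - P x * q') / Real.sqrt (P x ^ 2 + Q x ^ 2) ^ 3) x := by
  have hs : 0 < Real.sqrt (P x ^ 2 + Q x ^ 2) := Real.sqrt_pos.2 h0
  have hsq : Real.sqrt (P x ^ 2 + Q x ^ 2) ^ 2 = P x ^ 2 + Q x ^ 2 := Real.sq_sqrt h0.le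
  have hinner : HasDerivAt (fun s => P s ^ 2 + Q s ^ 2) (2 * P x * p' + 2 * Q x * q') x := by
    have := (hP.pow 2).add (hQ.pow 2)
    refine this.congr_deriv ?_
    push_cast
    ring
  have hsqrt := hinner.sqrt h0.ne'
  have := hP.div hsqrt hs.ne'
  refine this.congr_deriv ?_
  set S := Real.sqrt (P x ^ 2 + Q x ^ 2) with hSdef
  field_simp
  linear_combination p' * hsq

lemma key2 (P Q : ℝ → ℝ) (x p' q' : ℝ) (hP : HasDerivAt P p' x) (hQ : HasDerivAt Q q' x)
    (h0 : 0 < P x ^ 2 + Q x ^ 2) :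
    HasDerivAt (fun s => Q s / Real.sqrt (P s ^ 2 + Q s ^ 2))
      (P x * (P x * q' - Q x * p') / Real.sqrt (P x ^ 2 + Q x ^ 2) ^ 3) x := by
  have hs : 0 < Real.sqrt (P x ^ 2 + Q x ^ 2) := Real.sqrt_pos.2 h0
  have hsq : Real.sqrt (P x ^ 2 + Q x ^ 2) ^ 2 = P x ^ 2 + Q x ^ 2 := Real.sq_sqrt h0.le
  have hinner : HasDerivAt (fun s => P s ^ 2 + Q s ^ 2) (2 * P x * p' + 2 * Q x * q') x := by
    have := (hP.pow 2).add (hQ.pow 2)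
    refine this.congr_deriv ?_
    push_cast
    ring
  have hsqrt := hinner.sqrt h0.ne'
  have := hQ.div hsqrt hs.ne'
  refine this.congr_deriv ?_
  set S := Real.sqrt (P x ^ 2 + Q x ^ 2) with hSdef
  field_simp
  linear_combination q' * hsq



lemma algMain (a b S g1 Om Tp Tq Xp Xq Yp Yq m1 m2 : ℝ) (hS : 0 < S)
    (hS2 : S ^ 2 = a ^ 2 + b ^ 2)
    (hk1 : a * Tq - b * Tp = -(a * g1))
    (hk2 : a * ((b * Xp - a * Xq) - m1 * (b * Tp - a * Tq))
        + b * ((b * Yp - a * Yq) + m2 * (b * Tp - a * Tq)) = 0)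
    (hk3 : Om ^ 2 - 2 * a * g1 = -2 * g1) :
    2 * (a / S * (a * (a * Tq - b * Tp) / S ^ 3) - b / S * (b * (b * Tp - a * Tq) / S ^ 3))
      + 2 * (Om / S)
          * (b / S * ((a * (b * (b * Xp - a * Xq) / S ^ 3 - m1 * (b * (b * Tp - a * Tq) / S ^ 3))
                  + b * (b * (b * Yp - a * Yq) / S ^ 3 + m2 * (b * (b * Tp - a * Tq) / S ^ 3))) / S)
             - a / S * ((a * (a * (a * Xq - b * Xp) / S ^ 3 - m1 * (a * (a * Tq - b * Tp) / S ^ 3))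
                  + b * (a * (a * Yq - b * Yp) / S ^ 3 + m2 * (a * (a * Tq - b * Tp) / S ^ 3))) / S))
      + (Om / S) ^ 2
    = -2 * g1 / S ^ 2 := by
  have hS' : S ≠ 0 := hS.ne'
  have e1 : a / S * (a * (a * Tq - b * Tp) / S ^ 3) - b / S * (b * (b * Tp - a * Tq) / S ^ 3)
      = -(a * g1) / S ^ 2 := by
    field_simp
    linear_combination (-(a * Tq - b * Tp)) * hS2 + S ^ 2 * hk1
  have e2 : b / S * ((a * (b * (b * Xp - a * Xq) / S ^ 3 - m1 * (b * (b * Tp - a * Tq) / S ^ 3))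
                  + b * (b * (b * Yp - a * Yq) / S ^ 3 + m2 * (b * (b * Tp - a * Tq) / S ^ 3))) / S)
             - a / S * ((a * (a * (a * Xq - b * Xp) / S ^ 3 - m1 * (a * (a * Tq - b * Tp) / S ^ 3))
                  + b * (a * (a * Yq - b * Yp) / S ^ 3 + m2 * (a * (a * Tq - b * Tp) / S ^ 3))) / S)
      = 0 := by
    field_simp
    linear_combination (S ^ 2) * hk2 + (-(b*a*Xp) + b*a*m1*Tp + b*a*Tq*m2 + b*a*Yq - b^2*Tp*m2 - b^2*Yp + a^2*Xq - a^2*m1*Tq) * hS2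
  rw [e1, e2]
  field_simp
  linear_combination hk3




/-- With `p̄ = p/W`, `q̄ = q/W`, `ω̄ = ω/W`, at every point `(yG(t), y, t)` of
the graphical strip one has
`2(p̄·Tq̄ − q̄·Tp̄) + 2ω̄·(q̄·Yp̄ − p̄·Yq̄) + ω̄² = −2G'(t)/W²`. -/
theorem stmt7 (I : Set ℝ) (hIo : IsOpen I) (hIc : I.OrdConnected)
    (G : ℝ → ℝ) (hG : ContDiffOn ℝ 2 G I) (hG' : ∀ t ∈ I, 0 ≤ deriv G t) :
    ∀ y : ℝ, ∀ t ∈ I, ∀ g : ℝ × ℝ × ℝ, g = (y * G t, y, t) →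
      2 * ((pfun G g / Wfun G g) * dT (fun g' => qfun G g' / Wfun G g') g
            - (qfun G g / Wfun G g) * dT (fun g' => pfun G g' / Wfun G g') g)
        + 2 * (omfun G g / Wfun G g)
            * ((qfun G g / Wfun G g) * Yop G (fun g' => pfun G g' / Wfun G g') g
                - (pfun G g / Wfun G g) * Yop G (fun g' => qfun G g' / Wfun G g') g)
        + (omfun G g / Wfun G g) ^ 2
      = -2 * deriv G t / Wfun G g ^ 2 := by
  intro y t ht g hg
  subst hg
  have hG1 : DifferentiableAt ℝ G t :=
    (hG.differentiableOn (by norm_num)).differentiableAt (hIo.mem_nhds ht)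
  have hG2 : DifferentiableAt ℝ (deriv G) t := by
    have h1 : ContDiffOn ℝ 1 (deriv G) I := hG.deriv_of_isOpen hIo (by norm_num)
    exact (h1.differentiableOn one_ne_zero).differentiableAt (hIo.mem_nhds ht)
  have hg1 : 0 ≤ deriv G t := hG' t ht
  have ha : 0 < 1 + y ^ 2 / 2 * deriv G t := by nlinarith [sq_nonneg y]
  have h0 : 0 < (1 + y ^ 2 / 2 * deriv G t) ^ 2 + (-G t - y * G t * y / 2 * deriv G t) ^ 2 := by nlinarith [sq_nonneg (-G t - y * G t * y / 2 * deriv G t)]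
  have hS : 0 < Real.sqrt ((1 + y ^ 2 / 2 * deriv G t) ^ 2 + (-G t - y * G t * y / 2 * deriv G t) ^ 2) := Real.sqrt_pos.2 h0
  have hS2 : (Real.sqrt ((1 + y ^ 2 / 2 * deriv G t) ^ 2 + (-G t - y * G t * y / 2 * deriv G t) ^ 2)) ^ 2 = (1 + y ^ 2 / 2 * deriv G t) ^ 2 + (-G t - y * G t * y / 2 * deriv G t) ^ 2 := Real.sq_sqrt h0.le
  have hPt : HasDerivAt (fun s => 1 + y ^ 2 / 2 * deriv G s) (y ^ 2 / 2 * deriv (deriv G) t) t :=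
    (hG2.hasDerivAt.const_mul (y ^ 2 / 2)).const_add 1
  have hQt : HasDerivAt (fun s => -G s - y * G t * y / 2 * deriv G s) (-deriv G t - y * G t * y / 2 * deriv (deriv G) t) t :=
    (hG1.hasDerivAt.neg).sub (hG2.hasDerivAt.const_mul (y * G t * y / 2))
  have hPx : HasDerivAt (fun _ : ℝ => 1 + y ^ 2 / 2 * deriv G t) 0 (y * G t) := hasDerivAt_const _ _
  have hQx : HasDerivAt (fun s : ℝ => -G t - s * y / 2 * deriv G t) (-(y / 2 * deriv G t)) (y * G t) :=
    ((hasDerivAt_const _ (-G t)).sub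
      ((((hasDerivAt_id _).mul_const y).div_const 2).mul_const (deriv G t))).congr_deriv
      (by ring)
  have hPy : HasDerivAt (fun s : ℝ => 1 + s ^ 2 / 2 * deriv G t) (y * deriv G t) y :=
    ((((hasDerivAt_pow 2 y).div_const 2).mul_const (deriv G t)).const_add 1).congr_deriv
      (by push_cast; ring)
  have hQy : HasDerivAt (fun s : ℝ => -G t - y * G t * s / 2 * deriv G t) (-(y * G t / 2 * deriv G t)) y :=
    ((hasDerivAt_const _ (-G t)).sub
      ((((hasDerivAt_id _).const_mul (y * G t)).div_const 2).mul_const (deriv G t))).congr_deriv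
      (by ring)
  have E1 : deriv (fun t_1 => (1 + y ^ 2 / 2 * deriv G t_1) / Real.sqrt ((1 + y ^ 2 / 2 * deriv G t_1) ^ 2 + (-G t_1 - y * G t * y / 2 * deriv G t_1) ^ 2)) t = (-G t - y * G t * y / 2 * deriv G t) * ((-G t - y * G t * y / 2 * deriv G t) * (y ^ 2 / 2 * deriv (deriv G) t) - (1 + y ^ 2 / 2 * deriv G t) * (-deriv G t - y * G t * y / 2 * deriv (deriv G) t)) / Real.sqrt ((1 + y ^ 2 / 2 * deriv G t) ^ 2 + (-G t - y * G t * y / 2 * deriv G t) ^ 2) ^ 3 := (key1 _ _ _ _ _ hPt hQt h0).deriv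
  have E2 : deriv (fun t_1 => (-G t_1 - y * G t * y / 2 * deriv G t_1) / Real.sqrt ((1 + y ^ 2 / 2 * deriv G t_1) ^ 2 + (-G t_1 - y * G t * y / 2 * deriv G t_1) ^ 2)) t = (1 + y ^ 2 / 2 * deriv G t) * ((1 + y ^ 2 / 2 * deriv G t) * (-deriv G t - y * G t * y / 2 * deriv (deriv G) t) - (-G t - y * G t * y / 2 * deriv G t) * (y ^ 2 / 2 * deriv (deriv G) t)) / Real.sqrt ((1 + y ^ 2 / 2 * deriv G t) ^ 2 + (-G t - y * G t * y / 2 * deriv G t) ^ 2) ^ 3 := (key2 _ _ _ _ _ hPt hQt h0).deriv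
  have E3 : deriv (fun x => (1 + y ^ 2 / 2 * deriv G t) / Real.sqrt ((1 + y ^ 2 / 2 * deriv G t) ^ 2 + (-G t - x * y / 2 * deriv G t) ^ 2)) (y * G t) = (-G t - y * G t * y / 2 * deriv G t) * ((-G t - y * G t * y / 2 * deriv G t) * ((0:ℝ)) - (1 + y ^ 2 / 2 * deriv G t) * (-(y / 2 * deriv G t))) / Real.sqrt ((1 + y ^ 2 / 2 * deriv G t) ^ 2 + (-G t - y * G t * y / 2 * deriv G t) ^ 2) ^ 3 := (key1 _ _ _ _ _ hPx hQx h0).deriv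
  have E4 : deriv (fun x => (-G t - x * y / 2 * deriv G t) / Real.sqrt ((1 + y ^ 2 / 2 * deriv G t) ^ 2 + (-G t - x * y / 2 * deriv G t) ^ 2)) (y * G t) = (1 + y ^ 2 / 2 * deriv G t) * ((1 + y ^ 2 / 2 * deriv G t) * (-(y / 2 * deriv G t)) - (-G t - y * G t * y / 2 * deriv G t) * ((0:ℝ))) / Real.sqrt ((1 + y ^ 2 / 2 * deriv G t) ^ 2 + (-G t - y * G t * y / 2 * deriv G t) ^ 2) ^ 3 := (key2 _ _ _ _ _ hPx hQx h0).deriv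
  have E5 : deriv (fun y_1 => (1 + y_1 ^ 2 / 2 * deriv G t) / Real.sqrt ((1 + y_1 ^ 2 / 2 * deriv G t) ^ 2 + (-G t - y * G t * y_1 / 2 * deriv G t) ^ 2)) y = (-G t - y * G t * y / 2 * deriv G t) * ((-G t - y * G t * y / 2 * deriv G t) * (y * deriv G t) - (1 + y ^ 2 / 2 * deriv G t) * (-(y * G t / 2 * deriv G t))) / Real.sqrt ((1 + y ^ 2 / 2 * deriv G t) ^ 2 + (-G t - y * G t * y / 2 * deriv G t) ^ 2) ^ 3 := (key1 _ _ _ _ _ hPy hQy h0).deriv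
  have E6 : deriv (fun y_1 => (-G t - y * G t * y_1 / 2 * deriv G t) / Real.sqrt ((1 + y_1 ^ 2 / 2 * deriv G t) ^ 2 + (-G t - y * G t * y_1 / 2 * deriv G t) ^ 2)) y = (1 + y ^ 2 / 2 * deriv G t) * ((1 + y ^ 2 / 2 * deriv G t) * (-(y * G t / 2 * deriv G t)) - (-G t - y * G t * y / 2 * deriv G t) * (y * deriv G t)) / Real.sqrt ((1 + y ^ 2 / 2 * deriv G t) ^ 2 + (-G t - y * G t * y / 2 * deriv G t) ^ 2) ^ 3 := (key2 _ _ _ _ _ hPy hQy h0).deriv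
  have hk1 : (1 + y ^ 2 / 2 * deriv G t) * (-deriv G t - y * G t * y / 2 * deriv (deriv G) t) - (-G t - y * G t * y / 2 * deriv G t) * (y ^ 2 / 2 * deriv (deriv G) t) = -((1 + y ^ 2 / 2 * deriv G t) * (deriv G t)) := by ring
  have hk2 : (1 + y ^ 2 / 2 * deriv G t) * (((-G t - y * G t * y / 2 * deriv G t) * ((0:ℝ)) - (1 + y ^ 2 / 2 * deriv G t) * (-(y / 2 * deriv G t))) - (y / 2) * ((-G t - y * G t * y / 2 * deriv G t) * (y ^ 2 / 2 * deriv (deriv G) t) - (1 + y ^ 2 / 2 * deriv G t) * (-deriv G t - y * G t * y / 2 * deriv (deriv G) t)))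
      + (-G t - y * G t * y / 2 * deriv G t) * (((-G t - y * G t * y / 2 * deriv G t) * (y * deriv G t) - (1 + y ^ 2 / 2 * deriv G t) * (-(y * G t / 2 * deriv G t))) + (y * G t / 2) * ((-G t - y * G t * y / 2 * deriv G t) * (y ^ 2 / 2 * deriv (deriv G) t) - (1 + y ^ 2 / 2 * deriv G t) * (-deriv G t - y * G t * y / 2 * deriv (deriv G) t))) = 0 := by
    ring
  have hk3 : (-y * deriv G t) ^ 2 - 2 * (1 + y ^ 2 / 2 * deriv G t) * (deriv G t) = -2 * (deriv G t) := by ring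
  simp only [pfun, qfun, omfun, Wfun, dT, dX, dYc, X1op, X2op, Yop]
  rw [E1, E2, E3, E4, E5, E6]
  exact algMain (1 + y ^ 2 / 2 * deriv G t) (-G t - y * G t * y / 2 * deriv G t) (Real.sqrt ((1 + y ^ 2 / 2 * deriv G t) ^ 2 + (-G t - y * G t * y / 2 * deriv G t) ^ 2)) (deriv G t) (-y * deriv G t) (y ^ 2 / 2 * deriv (deriv G) t) (-deriv G t - y * G t * y / 2 * deriv (deriv G) t) ((0:ℝ)) (-(y / 2 * deriv G t)) (y * deriv G t) (-(y * G t / 2 * deriv G t))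
    (y / 2) (y * G t / 2) hS hS2 hk1 hk2 hk3
end
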